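/- For f₂₃(x) = (3795/512)x⁷ − (805/64)x¹¹ + (1771/256)x¹⁵ − (385/512)x²³, the following hold: f₂₃(1) = 1, f₂₃ is odd, f₂₃'(1) = f₂₃''(1) = f₂₃'''(1) = 0, and for x near 1, 1 − f₂₃(x) = O((1−x)⁴). -/

import Mathlib

noncomputable def f₂₃ : ℝ → ℝ := fun x =>
  (3795/512) * x ^ 7 - (805/64) * x ^ 11 + (1771/256) * x ^ 15 - (385/512) * x ^ 23

noncomputable def g1 : ℝ → ℝ := fun x =>
  (26565/512) * x ^ 6 - (8855/64) * x ^ 10 + (26565/256) * x ^ 14 - (8855/512) * x ^ 22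

noncomputable def g2 : ℝ → ℝ := fun x =>
  (159390/512) * x ^ 5 - (88550/64) * x ^ 9 + (371910/256) * x ^ 13 - (194810/512) * x ^ 21

noncomputable def g3 : ℝ → ℝ := fun x =>
  (796950/512) * x ^ 4 - (796950/64) * x ^ 8 + (4834830/256) * x ^ 12 - (4091010/512) * x ^ 20

noncomputable def q23 : ℝ → ℝ := fun x =>
  1 + 4*x + 10*x^2 + 20*x^3 + 35*x^4 + 56*x^5 + 84*x^6 + (57645/512)*x^7
  + (17325/128)*x^8 + (37345/256)*x^9 + (17633/128)*x^10 + (59983/512)*x^11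
  + (5775/64)*x^12 + (8085/128)*x^13 + (2695/64)*x^14 + (13475/512)*x^15
  + (1925/128)*x^16 + (1925/256)*x^17 + (385/128)*x^18 + (385/512)*x^19

lemma hd1 : ∀ x : ℝ, HasDerivAt f₂₃ (g1 x) x := by
  intro x
  have h := ((((hasDerivAt_pow 7 x).const_mul (3795/512:ℝ)).sub
      ((hasDerivAt_pow 11 x).const_mul (805/64:ℝ))).add
      ((hasDerivAt_pow 15 x).const_mul (1771/256:ℝ))).sub
      ((hasDerivAt_pow 23 x).const_mul (385/512:ℝ))
  refine HasDerivAt.congr_deriv h ?_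
  unfold g1; push_cast; ring

lemma hd2 : ∀ x : ℝ, HasDerivAt g1 (g2 x) x := by
  intro x
  have h := ((((hasDerivAt_pow 6 x).const_mul (26565/512:ℝ)).sub
      ((hasDerivAt_pow 10 x).const_mul (8855/64:ℝ))).add
      ((hasDerivAt_pow 14 x).const_mul (26565/256:ℝ))).sub
      ((hasDerivAt_pow 22 x).const_mul (8855/512:ℝ))
  refine HasDerivAt.congr_deriv h ?_
  unfold g2; push_cast; ring

lemma hd3 : ∀ x : ℝ, HasDerivAt g2 (g3 x) x := by
  intro x
  have h := ((((hasDerivAt_pow 5 x).const_mul (159390/512:ℝ)).sub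
      ((hasDerivAt_pow 9 x).const_mul (88550/64:ℝ))).add
      ((hasDerivAt_pow 13 x).const_mul (371910/256:ℝ))).sub
      ((hasDerivAt_pow 21 x).const_mul (194810/512:ℝ))
  refine HasDerivAt.congr_deriv h ?_
  unfold g3; push_cast; ring

lemma deriv1 : deriv f₂₃ = g1 := funext fun x => (hd1 x).deriv
lemma deriv2 : deriv g1 = g2 := funext fun x => (hd2 x).deriv
lemma deriv3 : deriv g2 = g3 := funext fun x => (hd3 x).deriv

theorem stmt12 :
    f₂₃ 1 = 1 ∧
    (∀ x : ℝ, f₂₃ (-x) = -f₂₃ x) ∧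
    deriv f₂₃ 1 = 0 ∧ deriv (deriv f₂₃) 1 = 0 ∧ deriv (deriv (deriv f₂₃)) 1 = 0 ∧
    (fun x : ℝ => 1 - f₂₃ x) =O[nhds 1] (fun x : ℝ => (1 - x) ^ 4) := by
  refine ⟨by norm_num [f₂₃], fun x => by unfold f₂₃; ring, ?_, ?_, ?_, ?_⟩
  · rw [deriv1]; norm_num [g1]
  · rw [deriv1, deriv2]; norm_num [g2]
  · rw [deriv1, deriv2, deriv3]; norm_num [g3]
  · have hfac : (fun x : ℝ => 1 - f₂₃ x) = fun x : ℝ => (1 - x) ^ 4 * q23 x := by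
      funext x; unfold f₂₃ q23; ring
    rw [hfac]
    have hq : (fun x : ℝ => q23 x) =O[nhds 1] (fun _ : ℝ => (1:ℝ)) := by
      apply Filter.Tendsto.isBigO_one
      exact (Continuous.tendsto (by unfold q23; continuity) 1)
    simpa using (Asymptotics.isBigO_refl (fun x : ℝ => (1 - x) ^ 4) (nhds 1)).mul hq
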